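/- Let 1 < p⁻ ≤ p⁺ < ∞. Then there exists a constant C = C(p⁻, p⁺) > 0 such that for all p ∈ [p⁻, p⁺], all μ ∈ ℝ, and all ξ, η ∈ ℝ^m, |ξ|^p ≤ C(|μ|^p + |η|^p + ⟨(μ²+|ξ|²)^{(p-2)/2} ξ − (μ²+|η|²)^{(p-2)/2} η, ξ − η⟩). -/

import Mathlib

private lemma sq_rpow_aux (x e : ℝ) (hx : 0 ≤ x) : ((x ^ 2 : ℝ)) ^ (e / 2) = x ^ e := by
  rw [← Real.rpow_natCast x 2, ← Real.rpow_mul hx]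
  norm_num
  congr 1
  ring

private lemma rpow_mul_self (x y z : ℝ) (hx : 0 < x) (h : y + 1 = z) :
    x ^ y * x = x ^ z := by
  rw [← h, Real.rpow_add_one hx.ne' y]

private lemma mono_aux (p μ s t : ℝ) (hp : 1 ≤ p) (ht : 0 ≤ t) (hts : t ≤ s) :
    t * (μ ^ 2 + t ^ 2) ^ ((p - 2) / 2) ≤ s * (μ ^ 2 + s ^ 2) ^ ((p - 2) / 2) := by
  have hs : 0 ≤ s := ht.trans hts
  rcases eq_or_lt_of_le ht with h0 | ht0
  · rw [← h0, zero_mul]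
    positivity
  rcases le_or_gt 2 p with hp2 | hp2
  · have hbase : μ ^ 2 + t ^ 2 ≤ μ ^ 2 + s ^ 2 := by nlinarith
    exact mul_le_mul hts
      (Real.rpow_le_rpow (by positivity) hbase (by linarith)) (by positivity) hs
  · have hs0 : 0 < s := lt_of_lt_of_le ht0 hts
    set c := (2 - p) / 2 with hc
    have hc0 : 0 < c := by rw [hc]; linarith
    have hc1 : 2 * c ≤ 1 := by rw [hc]; linarith
    have hμt : (0:ℝ) < μ ^ 2 + t ^ 2 := by positivity
    have hμs : (0:ℝ) < μ ^ 2 + s ^ 2 := by positivity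
    have hE : (p - 2) / 2 = -c := by rw [hc]; ring
    have hXt : (0:ℝ) < (μ ^ 2 + t ^ 2) ^ c := Real.rpow_pos_of_pos hμt c
    have hXs : (0:ℝ) < (μ ^ 2 + s ^ 2) ^ c := Real.rpow_pos_of_pos hμs c
    rw [hE, Real.rpow_neg hμt.le, Real.rpow_neg hμs.le, ← div_eq_mul_inv,
      ← div_eq_mul_inv, div_le_div_iff₀ hXt hXs]
    have key : (μ ^ 2 + s ^ 2) ^ c ≤ (s / t) * (μ ^ 2 + t ^ 2) ^ c := by
      have ht2 : t ^ 2 ≤ s ^ 2 := by nlinarith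
      have hb : μ ^ 2 + s ^ 2 ≤ (s / t) ^ 2 * (μ ^ 2 + t ^ 2) := by
        rw [div_pow, div_mul_eq_mul_div, le_div_iff₀ (by positivity)]
        nlinarith [mul_le_mul_of_nonneg_left ht2 (sq_nonneg μ)]
      calc (μ ^ 2 + s ^ 2) ^ c ≤ ((s / t) ^ 2 * (μ ^ 2 + t ^ 2)) ^ c :=
            Real.rpow_le_rpow hμs.le hb hc0.le
        _ = ((s / t) ^ 2) ^ c * (μ ^ 2 + t ^ 2) ^ c :=
            Real.mul_rpow (by positivity) hμt.le
        _ ≤ (s / t) * (μ ^ 2 + t ^ 2) ^ c := by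
            gcongr
            have h1 : (1:ℝ) ≤ s / t := (one_le_div ht0).mpr hts
            calc ((s / t) ^ 2 : ℝ) ^ c = (s / t) ^ (2 * c) := by
                  rw [← Real.rpow_natCast (s / t) 2, ← Real.rpow_mul (by positivity)]
                  norm_num
              _ ≤ (s / t) ^ (1:ℝ) := Real.rpow_le_rpow_of_exponent_le h1 hc1
              _ = s / t := Real.rpow_one _
    calc t * (μ ^ 2 + s ^ 2) ^ c ≤ t * ((s / t) * (μ ^ 2 + t ^ 2) ^ c) :=
          mul_le_mul_of_nonneg_left key ht0.le
      _ = s * (μ ^ 2 + t ^ 2) ^ c := by field_simp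

set_option maxHeartbeats 1000000 in
theorem stmt_9 (m : ℕ) (pm pp : ℝ) (h1 : 1 < pm) (h2 : pm ≤ pp) :
    ∃ C : ℝ, 0 < C ∧
      ∀ p : ℝ, pm ≤ p → p ≤ pp →
        ∀ μ : ℝ, ∀ ξ η : EuclideanSpace ℝ (Fin m),
          ‖ξ‖ ^ p ≤
            C * (|μ| ^ p + ‖η‖ ^ p +
              (inner ℝ (((μ ^ 2 + ‖ξ‖ ^ 2) ^ ((p - 2) / 2)) • ξ -
                  ((μ ^ 2 + ‖η‖ ^ 2) ^ ((p - 2) / 2)) • η) (ξ - η) : ℝ)) := by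
  set K : ℝ := max 4 (4 ^ ((1:ℝ) / (pm - 1))) with hKdef
  have hK4 : (4:ℝ) ≤ K := le_max_left _ _
  have hK1 : (1:ℝ) ≤ K := by linarith
  have hK0 : (0:ℝ) < K := by linarith
  have hKpm : (4:ℝ) ≤ K ^ (pm - 1) := by
    have h : (4:ℝ) ^ ((1:ℝ) / (pm - 1)) ≤ K := le_max_right _ _
    have := Real.rpow_le_rpow (by positivity) h (by linarith : (0:ℝ) ≤ pm - 1)
    rwa [← Real.rpow_mul (by norm_num : (0:ℝ) ≤ 4), one_div,
      inv_mul_cancel₀ (by linarith : pm - 1 ≠ 0), Real.rpow_one] at this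
  clear_value K
  clear hKdef
  refine ⟨K ^ pp + 16, by positivity, ?_⟩
  intro p hpm hpp μ ξ η
  have hp1 : 1 < p := lt_of_lt_of_le h1 hpm
  have hp0 : (0:ℝ) < p := by linarith
  set s := ‖ξ‖ with hs
  set t := ‖η‖ with ht
  have hs0 : (0:ℝ) ≤ s := norm_nonneg _
  have ht0 : (0:ℝ) ≤ t := norm_nonneg _
  set a : ℝ := (μ ^ 2 + s ^ 2) ^ ((p - 2) / 2) with ha'
  set b : ℝ := (μ ^ 2 + t ^ 2) ^ ((p - 2) / 2) with hb'
  have ha : 0 ≤ a := by rw [ha']; positivity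
  have hb : 0 ≤ b := by rw [hb']; positivity
  set I : ℝ := (inner ℝ (a • ξ - b • η) (ξ - η) : ℝ) with hI'
  have hinner : I = a * s ^ 2 + b * t ^ 2 - (a + b) * (inner ℝ ξ η : ℝ) := by
    rw [hI']
    simp only [inner_sub_left, inner_sub_right, real_inner_smul_left,
      real_inner_self_eq_norm_sq, real_inner_comm η ξ]
    ring
  have hxy : (inner ℝ ξ η : ℝ) ≤ s * t := real_inner_le_norm ξ η
  have hIlow : (s * a - t * b) * (s - t) ≤ I := by
    rw [hinner]
    linarith [mul_nonneg (add_nonneg ha hb) (sub_nonneg.mpr hxy),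
      sq_nonneg (s - t)]
  clear_value s t a b I
  clear hinner hxy hI' hs ht
  clear ξ η
  have hmono : 0 ≤ (s * a - t * b) * (s - t) := by
    rcases le_total t s with h | h
    · have h2 := mono_aux p μ s t hp1.le ht0 h
      rw [← ha', ← hb'] at h2
      exact mul_nonneg (by linarith) (by linarith)
    · have h2 := mono_aux p μ t s hp1.le hs0 h
      rw [← ha', ← hb'] at h2
      linarith [mul_nonneg (sub_nonneg.mpr h2) (sub_nonneg.mpr h)]
  have hIpos : 0 ≤ I := hmono.trans hIlow
  have hKp : (4:ℝ) ≤ K ^ (p - 1) :=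
    hKpm.trans (Real.rpow_le_rpow_of_exponent_le hK1 (by linarith))
  have hKpp : K ^ p ≤ K ^ pp := Real.rpow_le_rpow_of_exponent_le hK1 hpp
  have habs : (0:ℝ) ≤ |μ| ^ p := Real.rpow_nonneg (abs_nonneg μ) _
  have htps : (0:ℝ) ≤ t ^ p := Real.rpow_nonneg ht0 _
  have hKppn : (0:ℝ) ≤ K ^ pp := Real.rpow_nonneg hK0.le _
  by_cases hB : K * t < s ∧ K * |μ| < s
  · -- Case B: s dominates
    obtain ⟨hBt, hBμ⟩ := hB
    have hs0' : (0:ℝ) < s := lt_of_le_of_lt (mul_nonneg hK0.le ht0) hBt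
    have htK : t < s / K := (lt_div_iff₀' hK0).mpr hBt
    have hμK : |μ| < s / K := (lt_div_iff₀' hK0).mpr hBμ
    have hsK4 : s / K ≤ s / 4 :=
      div_le_div_of_nonneg_left hs0'.le (by norm_num) hK4
    have ht4 : t ≤ s / 4 := (htK.trans_le hsK4).le
    have hμ4 : |μ| ≤ s / 4 := (hμK.trans_le hsK4).le
    have hμ2 : μ ^ 2 ≤ s ^ 2 / 16 := by
      nlinarith [abs_nonneg μ, sq_abs μ]
    have hsp1 : (0:ℝ) ≤ s ^ (p - 1) := Real.rpow_nonneg hs0 _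
    have htp : t ^ (p - 1) ≤ s ^ (p - 1) / 4 := by
      calc t ^ (p - 1) ≤ (s / K) ^ (p - 1) :=
            Real.rpow_le_rpow ht0 htK.le (by linarith)
        _ = s ^ (p - 1) / K ^ (p - 1) := Real.div_rpow hs0 hK0.le _
        _ ≤ s ^ (p - 1) / 4 :=
            div_le_div_of_nonneg_left hsp1 (by norm_num) hKp
    have hbt : t * b ≤ s ^ (p - 1) / 4 := by
      rcases le_total p 2 with hp2 | hp2
      · rcases eq_or_lt_of_le ht0 with h0 | htpos
        · rw [← h0, zero_mul]
          linarith
        · have hbb : b ≤ t ^ (p - 2) := by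
            rw [hb', ← sq_rpow_aux t (p - 2) ht0]
            exact Real.rpow_le_rpow_of_nonpos (by positivity)
              (by linarith [sq_nonneg μ]) (by linarith)
          calc t * b ≤ t * t ^ (p - 2) :=
                mul_le_mul_of_nonneg_left hbb ht0
            _ = t ^ (p - 1) := by
                rw [mul_comm, rpow_mul_self t (p - 2) (p - 1) htpos (by ring)]
            _ ≤ s ^ (p - 1) / 4 := htp
      · have hbase : μ ^ 2 + t ^ 2 ≤ s ^ 2 := by nlinarith
        have hbb : b ≤ s ^ (p - 2) := by
          rw [hb', ← sq_rpow_aux s (p - 2) hs0]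
          exact Real.rpow_le_rpow (by positivity) hbase (by linarith)
        calc t * b ≤ (s / 4) * s ^ (p - 2) :=
              mul_le_mul ht4 hbb hb (by linarith)
          _ = s ^ (p - 2) * s / 4 := by ring
          _ = s ^ (p - 1) / 4 := by
              rw [rpow_mul_self s (p - 2) (p - 1) hs0' (by ring)]
    have has : s ^ (p - 1) / 2 ≤ s * a := by
      have hss : s ^ (p - 2) * s = s ^ (p - 1) :=
        rpow_mul_self s (p - 2) (p - 1) hs0' (by ring)
      rcases le_total 2 p with hp2 | hp2
      · have haa : s ^ (p - 2) ≤ a := by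
          rw [ha', ← sq_rpow_aux s (p - 2) hs0]
          exact Real.rpow_le_rpow (by positivity) (by linarith [sq_nonneg μ])
            (by linarith)
        have h4 := mul_le_mul_of_nonneg_right haa hs0
        rw [hss] at h4
        linarith
      · have hbase : μ ^ 2 + s ^ 2 ≤ 2 * s ^ 2 := by nlinarith
        have haa : (2:ℝ) ^ ((p - 2) / 2) * s ^ (p - 2) ≤ a := by
          have hh : ((2:ℝ) * s ^ 2) ^ ((p - 2) / 2) ≤ a := by
            rw [ha']
            exact Real.rpow_le_rpow_of_nonpos (by positivity) hbase (by linarith)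
          rw [Real.mul_rpow (by norm_num) (by positivity),
            sq_rpow_aux s (p - 2) hs0] at hh
          exact hh
        have h2 : (1:ℝ) / 2 ≤ (2:ℝ) ^ ((p - 2) / 2) := by
          have := Real.rpow_le_rpow_of_exponent_le (by norm_num : (1:ℝ) ≤ 2)
            (by linarith : (-1:ℝ) ≤ (p - 2) / 2)
          rw [Real.rpow_neg_one] at this
          linarith
        have h3 : (1:ℝ) / 2 * s ^ (p - 2) ≤ a :=
          le_trans (mul_le_mul_of_nonneg_right h2 (Real.rpow_nonneg hs0 _)) haa
        have h4 := mul_le_mul_of_nonneg_right h3 hs0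
        linarith [h4, hss]
    have hst : s / 2 ≤ s - t := by linarith
    have hsab : s ^ (p - 1) / 4 ≤ s * a - t * b := by linarith
    have hIbig : s ^ p / 16 ≤ I := by
      have hprod : (s ^ (p - 1) / 4) * (s / 2) ≤ (s * a - t * b) * (s - t) :=
        mul_le_mul hsab hst (by linarith) (by linarith)
      have hsp : s ^ (p - 1) * s = s ^ p :=
        rpow_mul_self s (p - 1) p hs0' (by ring)
      nlinarith [hprod, hIlow, hsp]
    have hfin : (0:ℝ) ≤ K ^ pp * (|μ| ^ p + t ^ p + I) :=
      mul_nonneg hKppn (by linarith)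
    nlinarith [hfin, hIbig, habs, htps]
  · -- Case A
    push_neg at hB
    have hKpn : (0:ℝ) ≤ K ^ p := Real.rpow_nonneg hK0.le _
    have hspb : s ^ p ≤ K ^ p * (|μ| ^ p + t ^ p) := by
      rcases lt_or_ge (K * t) s with h | h
      · have h' := hB h
        have e1 : K ^ p * |μ| ^ p ≤ K ^ p * (|μ| ^ p + t ^ p) :=
          mul_le_mul_of_nonneg_left (by linarith) hKpn
        calc s ^ p ≤ (K * |μ|) ^ p :=
              Real.rpow_le_rpow hs0 h' hp0.le
          _ = K ^ p * |μ| ^ p := Real.mul_rpow hK0.le (abs_nonneg μ)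
          _ ≤ K ^ p * (|μ| ^ p + t ^ p) := e1
      · have e1 : K ^ p * t ^ p ≤ K ^ p * (|μ| ^ p + t ^ p) :=
          mul_le_mul_of_nonneg_left (by linarith) hKpn
        calc s ^ p ≤ (K * t) ^ p := Real.rpow_le_rpow hs0 h hp0.le
          _ = K ^ p * t ^ p := Real.mul_rpow hK0.le ht0
          _ ≤ K ^ p * (|μ| ^ p + t ^ p) := e1
    have hmul : K ^ p * (|μ| ^ p + t ^ p) ≤ K ^ pp * (|μ| ^ p + t ^ p) :=
      mul_le_mul_of_nonneg_right hKpp (by linarith)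
    nlinarith [hspb, hmul, mul_nonneg hKppn hIpos, habs, htps, hIpos]
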